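/- Let 1 ≤ α ≤ 2 and let p : ℝ → ℝ be an odd function in C¹(ℝ) ∩ C²(ℝ∖{0}) with p'(ξ) ∼ ξ^α and p''(ξ) ∼ ξ^{α−1} for ξ ≥ ξ₀. Let k ≥ 3 and (ξ₁,…,ξ_{k+2}) ∈ ℤ^{k+2} with ∑ ξ_j = 0, |ξ₁| ∼ |ξ₂| ≫ |ξ₃| ≥ |ξ₄| ≥ max_{j≥5}|ξ_j| and |ξ₃+ξ₄| ≫ k·max_{j≥5}|ξ_j|. Then |∑_{j=1}^{k+2} p(ξ_j)| ≳ |ξ₃+ξ₄| |ξ₁|^α for |ξ₁| ≫ (max_{ξ∈[0,ξ₀]}|p'(ξ)|)^{1/α}. -/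

import Mathlib

open Real
noncomputable section

set_option maxHeartbeats 1000000

lemma deriv_even (p : ℝ → ℝ) (hC1 : ContDiff ℝ 1 p) (hodd : ∀ x : ℝ, p (-x) = - p x) (x : ℝ) :
    deriv p (-x) = deriv p x := by
  have hfun : p = fun y => -p (-y) := by
    funext y
    rw [hodd]; ring
  conv_rhs => rw [hfun]
  rw [deriv.fun_neg, deriv_comp_neg]
  ring

lemma deriv_bound (p : ℝ → ℝ) (α ξ₀ c₁ C₁ M : ℝ) (hα1 : 1 ≤ α) (hξ₀ : 0 < ξ₀) (hc₁ : 0 < c₁)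
    (hC1 : ContDiff ℝ 1 p) (hodd : ∀ x : ℝ, p (-x) = - p x)
    (hp' : ∀ ξ : ℝ, ξ₀ ≤ ξ → c₁ * ξ ^ α ≤ deriv p ξ ∧ deriv p ξ ≤ C₁ * ξ ^ α)
    (hM0 : 0 ≤ M) (hM : ∀ ξ ∈ Set.Icc (0 : ℝ) ξ₀, |deriv p ξ| ≤ M)
    (T : ℝ) (hT : 0 ≤ T) (x : ℝ) (hx : |x| ≤ T) :
    |deriv p x| ≤ M + C₁ * T ^ α := by
  have hC₁ : 0 < C₁ := by
    have h := hp' ξ₀ le_rfl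
    have hpow : (0:ℝ) < ξ₀ ^ α := rpow_pos_of_pos hξ₀ α
    nlinarith [h.1, h.2, mul_pos hc₁ hpow]
  have key : ∀ y : ℝ, 0 ≤ y → y ≤ T → |deriv p y| ≤ M + C₁ * T ^ α := by
    intro y hy0 hyT
    rcases le_or_gt y ξ₀ with h | h
    · have h2 : (0:ℝ) ≤ C₁ * T ^ α := by positivity
      linarith [hM y ⟨hy0, h⟩]
    · have h' := hp' y h.le
      have hyα : y ^ α ≤ T ^ α := rpow_le_rpow hy0 hyT (by linarith)
      have h0 : 0 ≤ deriv p y := le_trans (by positivity) h'.1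
      rw [abs_of_nonneg h0]
      calc deriv p y ≤ C₁ * y ^ α := h'.2
        _ ≤ C₁ * T ^ α := by nlinarith
        _ ≤ M + C₁ * T ^ α := by linarith
  rcases le_or_gt 0 x with h | h
  · exact key x h (by rwa [abs_of_nonneg h] at hx)
  · have e := deriv_even p hC1 hodd (-x)
    rw [neg_neg] at e
    rw [e]
    exact key (-x) (by linarith) (by rwa [abs_of_neg h] at hx)

lemma p_lip (p : ℝ → ℝ) (α ξ₀ c₁ C₁ M : ℝ) (hα1 : 1 ≤ α) (hξ₀ : 0 < ξ₀) (hc₁ : 0 < c₁)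
    (hC1 : ContDiff ℝ 1 p) (hodd : ∀ x : ℝ, p (-x) = - p x)
    (hp' : ∀ ξ : ℝ, ξ₀ ≤ ξ → c₁ * ξ ^ α ≤ deriv p ξ ∧ deriv p ξ ≤ C₁ * ξ ^ α)
    (hM0 : 0 ≤ M) (hM : ∀ ξ ∈ Set.Icc (0 : ℝ) ξ₀, |deriv p ξ| ≤ M)
    (T : ℝ) (hT : 0 ≤ T) (x y : ℝ) (hx : |x| ≤ T) (hy : |y| ≤ T) :
    |p x - p y| ≤ (M + C₁ * T ^ α) * |x - y| := by
  have hd : Differentiable ℝ p := hC1.differentiable (by norm_num)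
  have := Convex.norm_image_sub_le_of_norm_hasDerivWithin_le
    (f := p) (f' := deriv p) (s := Set.Icc (-T) T) (C := M + C₁ * T ^ α)
    (fun z _ => (hd z).hasDerivAt.hasDerivWithinAt)
    (fun z hz => by
      rw [Real.norm_eq_abs]
      exact deriv_bound p α ξ₀ c₁ C₁ M hα1 hξ₀ hc₁ hC1 hodd hp' hM0 hM T hT z
        (abs_le.mpr ⟨hz.1, hz.2⟩))
    (convex_Icc _ _) (Set.mem_Icc.mpr (abs_le.mp hy)) (Set.mem_Icc.mpr (abs_le.mp hx))
  simpa [Real.norm_eq_abs] using this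

lemma p_bound (p : ℝ → ℝ) (α ξ₀ c₁ C₁ M : ℝ) (hα1 : 1 ≤ α) (hξ₀ : 0 < ξ₀) (hc₁ : 0 < c₁)
    (hC1 : ContDiff ℝ 1 p) (hodd : ∀ x : ℝ, p (-x) = - p x)
    (hp' : ∀ ξ : ℝ, ξ₀ ≤ ξ → c₁ * ξ ^ α ≤ deriv p ξ ∧ deriv p ξ ≤ C₁ * ξ ^ α)
    (hM0 : 0 ≤ M) (hM : ∀ ξ ∈ Set.Icc (0 : ℝ) ξ₀, |deriv p ξ| ≤ M)
    (T : ℝ) (hT : 0 ≤ T) (x : ℝ) (hx : |x| ≤ T) :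
    |p x| ≤ (M + C₁ * T ^ α) * |x| := by
  have h0 : p 0 = 0 := by have := hodd 0; simp at this; linarith
  have := p_lip p α ξ₀ c₁ C₁ M hα1 hξ₀ hc₁ hC1 hodd hp' hM0 hM T hT x 0 hx (by simpa using hT)
  simpa [h0] using this

lemma p_lower (p : ℝ → ℝ) (α ξ₀ c₁ C₁ : ℝ) (hα1 : 1 ≤ α) (hξ₀ : 0 < ξ₀) (hc₁ : 0 < c₁)
    (hC1 : ContDiff ℝ 1 p)
    (hp' : ∀ ξ : ℝ, ξ₀ ≤ ξ → c₁ * ξ ^ α ≤ deriv p ξ ∧ deriv p ξ ≤ C₁ * ξ ^ α)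
    (m x y : ℝ) (hm : ξ₀ ≤ m) (hx : m ≤ x) (hy : m ≤ y) :
    c₁ * m ^ α * |x - y| ≤ |p x - p y| := by
  have hd : Differentiable ℝ p := hC1.differentiable (by norm_num)
  have hm0 : (0:ℝ) ≤ m := by linarith
  have key : ∀ a b : ℝ, m ≤ a → a ≤ b → c₁ * m ^ α * (b - a) ≤ p b - p a := by
    intro a b ha hab
    rcases eq_or_lt_of_le hab with rfl | hlt
    · simp
    · obtain ⟨c, hc, hceq⟩ := exists_hasDerivAt_eq_slope p (deriv p) hlt
        (hd.continuous.continuousOn) (fun z _ => (hd z).hasDerivAt)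
      have hcm : m ≤ c := le_of_lt (lt_of_le_of_lt ha hc.1)
      have h1 : c₁ * c ^ α ≤ deriv p c := (hp' c (le_trans hm hcm)).1
      have h2 : m ^ α ≤ c ^ α := rpow_le_rpow hm0 hcm (by linarith)
      have hle : c₁ * m ^ α ≤ (p b - p a) / (b - a) := by
        rw [← hceq]; nlinarith
      rw [le_div_iff₀ (by linarith)] at hle
      linarith
  rcases le_total x y with h | h
  · have h1 := key x y hx h
    have h0 : (0:ℝ) ≤ c₁ * m ^ α * (y - x) :=
      mul_nonneg (mul_nonneg hc₁.le (rpow_nonneg hm0 α)) (by linarith)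
    have h2 : |x - y| = y - x := by rw [abs_sub_comm]; exact abs_of_nonneg (by linarith)
    have h3 : |p x - p y| = p y - p x := by rw [abs_sub_comm]; exact abs_of_nonneg (by linarith)
    rw [h2, h3]; linarith
  · have h1 := key y x hy h
    have h0 : (0:ℝ) ≤ c₁ * m ^ α * (x - y) :=
      mul_nonneg (mul_nonneg hc₁.le (rpow_nonneg hm0 α)) (by linarith)
    have h2 : |x - y| = x - y := abs_of_nonneg (by linarith)
    have h3 : |p x - p y| = p x - p y := abs_of_nonneg (by linarith)
    rw [h2, h3]; linarith

section helper
variable {k : ℕ}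

lemma finval (k : ℕ) (hk : 3 ≤ k) : ((0 : Fin (k+2)) : ℕ) = 0 ∧ ((1 : Fin (k+2)) : ℕ) = 1
    ∧ ((2 : Fin (k+2)) : ℕ) = 2 ∧ ((3 : Fin (k+2)) : ℕ) = 3 := by
  refine ⟨rfl, ?_, ?_, ?_⟩
  · simpa using Fin.val_cast_of_lt (n := k+2) (a := 1) (by omega)
  · simpa using Fin.val_cast_of_lt (n := k+2) (a := 2) (by omega)
  · simpa using Fin.val_cast_of_lt (n := k+2) (a := 3) (by omega)

lemma sum_split {G : Type*} [AddCommMonoid G] (k : ℕ) (hk : 3 ≤ k) (F : Fin (k+2) → G) :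
    ∑ j, F j = F 0 + F 1 + F 2 + F 3
      + ∑ j ∈ Finset.univ.filter (fun j : Fin (k+2) => 4 ≤ (j:ℕ)), F j := by
  obtain ⟨h0, h1, h2, h3⟩ := finval k hk
  rw [← Finset.sum_filter_add_sum_filter_not Finset.univ (fun j : Fin (k+2) => 4 ≤ (j:ℕ)) F]
  rw [add_comm]
  congr 1
  have : Finset.univ.filter (fun j : Fin (k+2) => ¬ 4 ≤ (j:ℕ)) = {0, 1, 2, 3} := by
    ext j
    simp only [Finset.mem_filter, Finset.mem_univ, true_and, Finset.mem_insert,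
      Finset.mem_singleton, Fin.ext_iff, h0, h1, h2, h3, not_le]
    omega
  rw [this]
  have d01 : (0 : Fin (k+2)) ≠ 1 := by simp [Fin.ext_iff, h0, h1]
  have d02 : (0 : Fin (k+2)) ≠ 2 := by
    intro h; have := congrArg Fin.val h; rw [h0, h2] at this; omega
  have d03 : (0 : Fin (k+2)) ≠ 3 := by
    intro h; have := congrArg Fin.val h; rw [h0, h3] at this; omega
  have d12 : (1 : Fin (k+2)) ≠ 2 := by
    intro h; have := congrArg Fin.val h; rw [h1, h2] at this; omega
  have d13 : (1 : Fin (k+2)) ≠ 3 := by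
    intro h; have := congrArg Fin.val h; rw [h1, h3] at this; omega
  have d23 : (2 : Fin (k+2)) ≠ 3 := by
    intro h; have := congrArg Fin.val h; rw [h2, h3] at this; omega
  rw [Finset.sum_insert (by simp [d01, d02, d03]), Finset.sum_insert (by simp [d12, d13]),
    Finset.sum_insert (by simp [d23]), Finset.sum_singleton, add_assoc, add_assoc]

end helper

lemma resonance_main
    (α : ℝ) (hα1 : 1 ≤ α) (hα2 : α ≤ 2)
    (p : ℝ → ℝ) (ξ₀ : ℝ) (hξ₀ : 0 < ξ₀)
    (hodd : ∀ x : ℝ, p (-x) = - p x)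
    (hC1 : ContDiff ℝ 1 p)
    (c₁ C₁ : ℝ) (hc₁ : 0 < c₁)
    (hp' : ∀ ξ : ℝ, ξ₀ ≤ ξ → c₁ * ξ ^ α ≤ deriv p ξ ∧ deriv p ξ ≤ C₁ * ξ ^ α)
    (M : ℝ) (hM0 : 0 ≤ M) (hM : ∀ ξ ∈ Set.Icc (0 : ℝ) ξ₀, |deriv p ξ| ≤ M)
    (C : ℝ) (hC : 1 ≤ C)
    (K : ℝ) (hK4 : 4 ≤ K) (hK12 : 12 * C ≤ K)
    (hKc : 100 * (1 + C₁ * C ^ 2) / c₁ ≤ K) (hKξ : 2 / c₁ ^ (1/α) ≤ K)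
    (k : ℕ) (hk : 3 ≤ k) (ξ : Fin (k + 2) → ℤ)
    (hsum : (∑ j, ξ j) = 0)
    (h01 : |((ξ 0 : ℤ) : ℝ)| ≤ C * |((ξ 1 : ℤ) : ℝ)|)
    (h10 : |((ξ 1 : ℤ) : ℝ)| ≤ C * |((ξ 0 : ℤ) : ℝ)|)
    (h21 : K * |((ξ 2 : ℤ) : ℝ)| ≤ |((ξ 1 : ℤ) : ℝ)|)
    (h32 : |((ξ 3 : ℤ) : ℝ)| ≤ |((ξ 2 : ℤ) : ℝ)|)
    (hsm : ∀ j : Fin (k + 2), 4 ≤ (j : ℕ) → |((ξ j : ℤ) : ℝ)| ≤ |((ξ 3 : ℤ) : ℝ)|)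
    (hsm2 : ∀ j : Fin (k + 2), 4 ≤ (j : ℕ) →
        K * k * |((ξ j : ℤ) : ℝ)| ≤ |((ξ 2 + ξ 3 : ℤ) : ℝ)|)
    (hbig : K * M ^ (1 / α) ≤ |((ξ 0 : ℤ) : ℝ)|)
    (hpos : 0 < ((ξ 0 : ℤ) : ℝ)) :
    c₁ / 16 * |((ξ 2 + ξ 3 : ℤ) : ℝ)| * |((ξ 0 : ℤ) : ℝ)| ^ α
      ≤ |∑ j, p ((ξ j : ℤ) : ℝ)| := by
  have hα0 : (0:ℝ) ≤ α := by linarith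
  have hαne : α ≠ 0 := by linarith
  have hK0 : (0:ℝ) < K := by linarith
  have hK1 : (1:ℝ) ≤ K := by linarith
  have hC0 : (0:ℝ) < C := by linarith
  have hC₁ : 0 < C₁ := by
    have h := hp' ξ₀ le_rfl
    have hpow : (0:ℝ) < ξ₀ ^ α := rpow_pos_of_pos hξ₀ α
    nlinarith [h.1, h.2, mul_pos hc₁ hpow]
  set N : ℝ := ((ξ 0 : ℤ) : ℝ) with hNdef
  set x1 : ℝ := ((ξ 1 : ℤ) : ℝ) with hx1def
  set x2 : ℝ := ((ξ 2 : ℤ) : ℝ) with hx2def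
  set x3 : ℝ := ((ξ 3 : ℤ) : ℝ) with hx3def
  have hN : 0 < N := hpos
  have hNabs : |((ξ 0 : ℤ) : ℝ)| = N := abs_of_pos hpos
  rw [hNabs] at h01 h10 hbig ⊢
  have hNα : (0:ℝ) < N ^ α := rpow_pos_of_pos hN α
  set S : ℝ := |((ξ 2 + ξ 3 : ℤ) : ℝ)| with hSdef
  have hS0 : 0 ≤ S := abs_nonneg _
  have hSeq : S = |x2 + x3| := by rw [hSdef]; push_cast; rfl
  set T2 : ℝ := |x2| with hT2def
  have hT20 : 0 ≤ T2 := abs_nonneg _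
  -- T2 ≤ C * N / K
  have hT2N : T2 ≤ C * N / K := by
    rw [le_div_iff₀ hK0]
    calc T2 * K = K * T2 := by ring
      _ ≤ |x1| := h21
      _ ≤ C * N := h10
  -- S ≤ 2 * T2
  have hS2T : S ≤ 2 * T2 := by
    rw [hSeq]
    calc |x2 + x3| ≤ |x2| + |x3| := abs_add_le _ _
      _ ≤ 2 * T2 := by rw [← hT2def]; linarith
  -- M ≤ N^α / K
  have hMαle : M ^ (1/α) ≤ N / K := by rw [le_div_iff₀ hK0]; linarith
  have hKα : K ≤ K ^ α := by
    calc K = K ^ (1:ℝ) := (rpow_one K).symm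
      _ ≤ K ^ α := rpow_le_rpow_of_exponent_le hK1 hα1
  have hMNK : M ≤ N ^ α / K := by
    have h1 : (M ^ (1/α)) ^ α ≤ (N / K) ^ α :=
      rpow_le_rpow (rpow_nonneg hM0 _) hMαle hα0
    have h2 : (M ^ (1/α)) ^ α = M := by
      rw [← Real.rpow_mul hM0, one_div_mul_cancel hαne, rpow_one]
    have h3 : (N / K) ^ α = N ^ α / K ^ α := div_rpow hN.le hK0.le α
    have h4 : N ^ α / K ^ α ≤ N ^ α / K :=
      div_le_div_of_nonneg_left hNα.le hK0 hKα
    rw [h2, h3] at h1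
    linarith
  -- N ≥ 2 ξ₀
  have hc₁α : (0:ℝ) < c₁ ^ (1/α) := rpow_pos_of_pos hc₁ _
  have hN2ξ : 2 * ξ₀ ≤ N := by
    have h1 : c₁ * ξ₀ ^ α ≤ M := by
      have := (hp' ξ₀ le_rfl).1
      have h2 := hM ξ₀ ⟨hξ₀.le, le_rfl⟩
      calc c₁ * ξ₀ ^ α ≤ deriv p ξ₀ := this
        _ ≤ |deriv p ξ₀| := le_abs_self _
        _ ≤ M := h2
    have h2 : c₁ ^ (1/α) * ξ₀ ≤ M ^ (1/α) := by
      have := rpow_le_rpow (by positivity) h1 (by positivity : (0:ℝ) ≤ 1/α)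
      rwa [mul_rpow hc₁.le (rpow_nonneg hξ₀.le α), ← Real.rpow_mul hξ₀.le,
        mul_one_div_cancel hαne, rpow_one] at this
    have h3 : 2 ≤ K * c₁ ^ (1/α) := by
      rw [div_le_iff₀ hc₁α] at hKξ
      linarith
    calc 2 * ξ₀ ≤ K * c₁ ^ (1/α) * ξ₀ := by
          have := mul_le_mul_of_nonneg_right h3 hξ₀.le
          linarith
      _ ≤ K * M ^ (1/α) := by
          have := mul_le_mul_of_nonneg_left h2 hK0.le
          linarith
      _ ≤ N := hbig
  -- the small-index set
  set s : Finset (Fin (k+2)) := Finset.univ.filter (fun j : Fin (k+2) => 4 ≤ (j:ℕ)) with hsdef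
  set η : ℝ := ∑ j ∈ s, ((ξ j : ℤ) : ℝ) with hηdef
  have hk3 : (3:ℝ) ≤ (k:ℝ) := by exact_mod_cast hk
  have hKk0 : (0:ℝ) < K * k := by positivity
  -- sum of small absolute values
  have hBj : ∀ j ∈ s, |((ξ j : ℤ) : ℝ)| ≤ S / (K * k) := by
    intro j hj
    rw [hsdef, Finset.mem_filter] at hj
    have := hsm2 j hj.2
    rw [le_div_iff₀ hKk0]
    linarith
  have hSsum : ∑ j ∈ s, |((ξ j : ℤ) : ℝ)| ≤ 2 * S / K := by
    have h1 := Finset.sum_le_card_nsmul s (fun j => |((ξ j : ℤ) : ℝ)|) (S / (K * k)) hBj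
    rw [nsmul_eq_mul] at h1
    have hcard : (s.card : ℝ) ≤ 2 * k := by
      have h2 : s.card ≤ k + 2 := by
        calc s.card ≤ Finset.univ.card := Finset.card_filter_le _ _
          _ = k + 2 := by simp
      have : (s.card : ℝ) ≤ ((k:ℝ) + 2) := by exact_mod_cast h2
      linarith
    have h3 : (s.card : ℝ) * (S / (K * k)) ≤ 2 * k * (S / (K * k)) :=
      mul_le_mul_of_nonneg_right hcard (by positivity)
    have h4 : 2 * (k:ℝ) * (S / (K * k)) = 2 * S / K := by
      field_simp
    linarith
  have hη : |η| ≤ S / 2 := by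
    have h1 : |η| ≤ ∑ j ∈ s, |((ξ j : ℤ) : ℝ)| := Finset.abs_sum_le_sum_abs _ _
    have h2 : 2 * S / K ≤ S / 2 := by
      rw [div_le_div_iff₀ hK0 (by norm_num : (0:ℝ) < 2)]
      have := mul_le_mul_of_nonneg_left hK4 hS0
      linarith only [this, hS0]
    linarith
  -- the cast sum identity
  have hz : ξ 0 + ξ 1 + ξ 2 + ξ 3 + ∑ j ∈ s, ξ j = 0 := by
    rw [hsdef, ← sum_split k hk ξ]; exact hsum
  have hcast : N + x1 + x2 + x3 + η = 0 := by
    have := congrArg (fun n : ℤ => (n:ℝ)) hz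
    push_cast at this
    rw [hNdef, hx1def, hx2def, hx3def, hηdef]
    convert this using 3
  set σ : ℝ := x2 + x3 + η with hσdef
  have hx1eq : x1 = -(N + σ) := by rw [hσdef]; linarith
  -- bounds on σ
  have hσup : |σ| ≤ N / 4 := by
    have h1 : |σ| ≤ |x2 + x3| + |η| := by
      rw [hσdef]; exact (abs_add_le _ _)
    have h2 : |σ| ≤ 3 * S / 2 := by rw [hSeq]; linarith
    have h3 : 3 * S / 2 ≤ 3 * T2 := by linarith
    have h4 : 3 * T2 ≤ 3 * (C * N / K) := by linarith
    have h5 : 3 * (C * N / K) ≤ N / 4 := by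
      rw [show 3 * (C * N / K) = 3 * C * N / K by ring,
        div_le_div_iff₀ hK0 (by norm_num : (0:ℝ) < 4)]
      have := mul_le_mul_of_nonneg_right hK12 hN.le
      linarith only [this]
    linarith
  have hσlow : S / 2 ≤ |σ| := by
    have h1 : x2 + x3 = σ - η := by rw [hσdef]; ring
    have h2 : S ≤ |σ| + |η| := by
      rw [hSeq, h1, sub_eq_add_neg]
      calc |σ + -η| ≤ |σ| + |-η| := abs_add_le _ _
        _ = |σ| + |η| := by rw [abs_neg]
    linarith
  -- main MVT lower bound
  have hm1 : ξ₀ ≤ N / 2 := by linarith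
  have hm2 : N / 2 ≤ N := by linarith
  have hm3 : N / 2 ≤ N + σ := by
    have := abs_le.mp hσup
    linarith [this.1]
  have hmvt := p_lower p α ξ₀ c₁ C₁ hα1 hξ₀ hc₁ hC1 hp' (N/2) N (N+σ) hm1 hm2 hm3
  have hNσ : |N - (N + σ)| = |σ| := by rw [show N - (N+σ) = -σ by ring, abs_neg]
  rw [hNσ] at hmvt
  -- (N/2)^α ≥ N^α/4
  have hhalf : N ^ α / 4 ≤ (N / 2) ^ α := by
    have h1 : (N/2) ^ α = N ^ α / 2 ^ α := div_rpow hN.le (by norm_num) α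
    have h2 : (2:ℝ) ^ α ≤ 4 := by
      calc (2:ℝ) ^ α ≤ (2:ℝ) ^ (2:ℝ) := rpow_le_rpow_of_exponent_le (by norm_num) hα2
        _ = 4 := by
          rw [show (2:ℝ) = ((2:ℕ):ℝ) by norm_num, rpow_natCast]
          norm_num
    have h3 : (0:ℝ) < 2 ^ α := rpow_pos_of_pos (by norm_num) α
    rw [h1]
    exact div_le_div_of_nonneg_left hNα.le h3 h2
  -- key1
  have key1 : c₁ / 8 * (S * N ^ α) ≤ |p N - p (N + σ)| := by
    have t1 : (N ^ α / 4) * (S / 2) ≤ (N/2) ^ α * |σ| :=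
      mul_le_mul hhalf hσlow (by linarith) (le_trans (by positivity) hhalf)
    have t2 := mul_le_mul_of_nonneg_left t1 hc₁.le
    linarith only [hmvt, t2]
  -- bound on M + C₁ T2^α
  have hMT : M + C₁ * T2 ^ α ≤ c₁ / 100 * N ^ α := by
    have hT2α : T2 ^ α ≤ (C * N / K) ^ α := rpow_le_rpow hT20 hT2N hα0
    have hCNK : (C * N / K) ^ α = C ^ α * N ^ α / K ^ α := by
      rw [div_rpow (by positivity) hK0.le, mul_rpow hC0.le hN.le]
    have hCα : C ^ α ≤ C ^ 2 := by
      calc C ^ α ≤ C ^ (2:ℝ) := rpow_le_rpow_of_exponent_le hC hα2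
        _ = C ^ 2 := by
          rw [show (2:ℝ) = ((2:ℕ):ℝ) by norm_num, rpow_natCast]
    have h5 : C ^ α * N ^ α / K ^ α ≤ C ^ 2 * N ^ α / K := by
      apply div_le_div₀ (by positivity) _ hK0 hKα
      exact mul_le_mul_of_nonneg_right hCα hNα.le
    have h6 : T2 ^ α ≤ C ^ 2 * N ^ α / K := by linarith
    have h7 : C₁ * T2 ^ α ≤ C₁ * (C ^ 2 * N ^ α / K) :=
      mul_le_mul_of_nonneg_left h6 hC₁.le
    have h8 : M + C₁ * T2 ^ α ≤ (1 + C₁ * C ^ 2) * N ^ α / K := by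
      rw [add_mul, one_mul, add_div]
      have : C₁ * (C ^ 2 * N ^ α / K) = C₁ * C ^ 2 * N ^ α / K := by ring
      linarith [hMNK]
    have h9 : (1 + C₁ * C ^ 2) * N ^ α / K ≤ c₁ / 100 * N ^ α := by
      rw [div_le_iff₀ hc₁] at hKc
      rw [div_le_iff₀ hK0]
      have := mul_le_mul_of_nonneg_right hKc hNα.le
      linarith only [this]
    linarith
  -- key2 : the (x2, x3) pair
  have hMT0 : 0 ≤ M + C₁ * T2 ^ α := by positivity
  have key2 : |p x2 + p x3| ≤ c₁ / 100 * (S * N ^ α) := by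
    have h1 : p x3 = - p (-x3) := by
      have := hodd (-x3); rw [neg_neg] at this; linarith
    have h2 : p x2 + p x3 = p x2 - p (-x3) := by rw [h1]; ring
    have h3 := p_lip p α ξ₀ c₁ C₁ M hα1 hξ₀ hc₁ hC1 hodd hp' hM0 hM T2 hT20 x2 (-x3)
      le_rfl (by rw [abs_neg]; exact h32)
    have h4 : |x2 - -x3| = S := by rw [hSeq]; ring_nf
    rw [h2]
    rw [h4] at h3
    calc |p x2 - p (-x3)| ≤ (M + C₁ * T2 ^ α) * S := h3
      _ ≤ (c₁ / 100 * N ^ α) * S := mul_le_mul_of_nonneg_right hMT hS0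
      _ = c₁ / 100 * (S * N ^ α) := by ring
  -- key3 : the small terms
  have key3 : |∑ j ∈ s, p ((ξ j : ℤ) : ℝ)| ≤ c₁ / 100 * (S * N ^ α) := by
    have h1 : |∑ j ∈ s, p ((ξ j : ℤ) : ℝ)| ≤ ∑ j ∈ s, |p ((ξ j : ℤ) : ℝ)| :=
      Finset.abs_sum_le_sum_abs _ _
    have h2 : ∑ j ∈ s, |p ((ξ j : ℤ) : ℝ)| ≤ ∑ j ∈ s, (M + C₁ * T2 ^ α) * |((ξ j : ℤ) : ℝ)| := by
      apply Finset.sum_le_sum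
      intro j hj
      rw [hsdef, Finset.mem_filter] at hj
      exact p_bound p α ξ₀ c₁ C₁ M hα1 hξ₀ hc₁ hC1 hodd hp' hM0 hM T2 hT20 _
        (le_trans (hsm j hj.2) (le_trans h32 le_rfl))
    rw [← Finset.mul_sum] at h2
    have h3 : ∑ j ∈ s, |((ξ j : ℤ) : ℝ)| ≤ S := by
      have h2' : 2 * S / K ≤ S := by
        rw [div_le_iff₀ hK0]
        have := mul_le_mul_of_nonneg_left hK4 hS0
        linarith only [this, hS0]
      linarith
    have h4 : (M + C₁ * T2 ^ α) * (∑ j ∈ s, |((ξ j : ℤ) : ℝ)|) ≤ (M + C₁ * T2 ^ α) * S :=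
      mul_le_mul_of_nonneg_left h3 hMT0
    have h5 : (M + C₁ * T2 ^ α) * S ≤ (c₁ / 100 * N ^ α) * S :=
      mul_le_mul_of_nonneg_right hMT hS0
    calc |∑ j ∈ s, p ((ξ j : ℤ) : ℝ)| ≤ (M + C₁ * T2 ^ α) * (∑ j ∈ s, |((ξ j : ℤ) : ℝ)|) :=
          le_trans h1 h2
      _ ≤ (c₁ / 100 * N ^ α) * S := le_trans h4 h5
      _ = c₁ / 100 * (S * N ^ α) := by ring
  -- assemble
  have htotal : ∑ j, p ((ξ j : ℤ) : ℝ)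
      = (p N - p (N + σ)) + (p x2 + p x3) + ∑ j ∈ s, p ((ξ j : ℤ) : ℝ) := by
    rw [sum_split k hk (fun j => p ((ξ j : ℤ) : ℝ)), ← hsdef, ← hNdef, ← hx1def, ← hx2def,
      ← hx3def, hx1eq, hodd]
    ring
  have key4 : |p N - p (N + σ)| ≤ |∑ j, p ((ξ j : ℤ) : ℝ)| + |p x2 + p x3|
      + |∑ j ∈ s, p ((ξ j : ℤ) : ℝ)| := by
    have h1 : p N - p (N + σ) = (∑ j, p ((ξ j : ℤ) : ℝ)) - (p x2 + p x3)
        - ∑ j ∈ s, p ((ξ j : ℤ) : ℝ) := by rw [htotal]; ring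
    rw [h1]
    calc |(∑ j, p ((ξ j : ℤ) : ℝ)) - (p x2 + p x3) - ∑ j ∈ s, p ((ξ j : ℤ) : ℝ)|
        ≤ |(∑ j, p ((ξ j : ℤ) : ℝ)) - (p x2 + p x3)| + |∑ j ∈ s, p ((ξ j : ℤ) : ℝ)| :=
          abs_sub _ _
      _ ≤ |∑ j, p ((ξ j : ℤ) : ℝ)| + |p x2 + p x3| + |∑ j ∈ s, p ((ξ j : ℤ) : ℝ)| := by
          linarith [abs_sub (∑ j, p ((ξ j : ℤ) : ℝ)) (p x2 + p x3)]
  have final : c₁ / 16 * (S * N ^ α) ≤ |∑ j, p ((ξ j : ℤ) : ℝ)| := by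
    have hQ : 0 ≤ c₁ * (S * N ^ α) := by positivity
    linarith only [key1, key2, key3, key4, hQ]
  calc c₁ / 16 * S * N ^ α = c₁ / 16 * (S * N ^ α) := by ring
    _ ≤ |∑ j, p ((ξ j : ℤ) : ℝ)| := final

/-- non-resonance estimate (Lemma 4.7 of the paper) with explicit constants.
If `∑ ξ_j = 0`, `|ξ₁| ∼ |ξ₂| ≫ |ξ₃| ≥ |ξ₄| ≥ max_{j≥5}|ξ_j|`,
`|ξ₃+ξ₄| ≫ k·max_{j≥5}|ξ_j|` and `|ξ₁|` is large enough, then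
`|∑_j p(ξ_j)| ≳ |ξ₃+ξ₄| |ξ₁|^α`. -/
theorem resonance_lower_bound_2
    (α : ℝ) (hα1 : 1 ≤ α) (hα2 : α ≤ 2)
    (p : ℝ → ℝ) (ξ₀ : ℝ) (hξ₀ : 0 < ξ₀)
    (hodd : ∀ x : ℝ, p (-x) = - p x)
    (hC1 : ContDiff ℝ 1 p) (hC2 : ContDiffOn ℝ 2 p {x : ℝ | x ≠ 0})
    (c₁ C₁ : ℝ) (hc₁ : 0 < c₁)
    (hp' : ∀ ξ : ℝ, ξ₀ ≤ ξ → c₁ * ξ ^ α ≤ deriv p ξ ∧ deriv p ξ ≤ C₁ * ξ ^ α)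
    (hp'' : ∀ ξ : ℝ, ξ₀ ≤ ξ →
      c₁ * ξ ^ (α - 1) ≤ |deriv (deriv p) ξ| ∧ |deriv (deriv p) ξ| ≤ C₁ * ξ ^ (α - 1))
    (M : ℝ) (hM0 : 0 ≤ M) (hM : ∀ ξ ∈ Set.Icc (0 : ℝ) ξ₀, |deriv p ξ| ≤ M)
    (C : ℝ) (hC : 1 ≤ C) :
    ∃ K ≥ (1 : ℝ), ∃ c' > (0 : ℝ), ∀ k : ℕ, 3 ≤ k →
      ∀ ξ : Fin (k + 2) → ℤ,
        (∑ j, ξ j) = 0 →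
        |((ξ 0 : ℤ) : ℝ)| ≤ C * |((ξ 1 : ℤ) : ℝ)| →
        |((ξ 1 : ℤ) : ℝ)| ≤ C * |((ξ 0 : ℤ) : ℝ)| →
        K * |((ξ 2 : ℤ) : ℝ)| ≤ |((ξ 1 : ℤ) : ℝ)| →
        |((ξ 3 : ℤ) : ℝ)| ≤ |((ξ 2 : ℤ) : ℝ)| →
        (∀ j : Fin (k + 2), 4 ≤ (j : ℕ) →
          |((ξ j : ℤ) : ℝ)| ≤ |((ξ 3 : ℤ) : ℝ)|) →
        (∀ j : Fin (k + 2), 4 ≤ (j : ℕ) →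
          K * k * |((ξ j : ℤ) : ℝ)| ≤ |((ξ 2 + ξ 3 : ℤ) : ℝ)|) →
        K * M ^ (1 / α) ≤ |((ξ 0 : ℤ) : ℝ)| →
        c' * |((ξ 2 + ξ 3 : ℤ) : ℝ)| * |((ξ 0 : ℤ) : ℝ)| ^ α
          ≤ |∑ j, p ((ξ j : ℤ) : ℝ)| := by
  have hC₁ : 0 < C₁ := by
    have h := hp' ξ₀ le_rfl
    have hpow : (0:ℝ) < ξ₀ ^ α := rpow_pos_of_pos hξ₀ α
    nlinarith [h.1, h.2, mul_pos hc₁ hpow]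
  have hc₁α : (0:ℝ) < c₁ ^ ((1:ℝ)/α) := rpow_pos_of_pos hc₁ _
  set K : ℝ := 4 + 12 * C + 100 * (1 + C₁ * C ^ 2) / c₁ + 2 / c₁ ^ ((1:ℝ)/α) with hKdef
  have t1 : (0:ℝ) ≤ 12 * C := by linarith
  have t2 : (0:ℝ) ≤ 100 * (1 + C₁ * C ^ 2) / c₁ := by positivity
  have t3 : (0:ℝ) ≤ 2 / c₁ ^ ((1:ℝ)/α) := by positivity
  have hK4 : 4 ≤ K := by rw [hKdef]; linarith
  have hK12 : 12 * C ≤ K := by rw [hKdef]; linarith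
  have hKc : 100 * (1 + C₁ * C ^ 2) / c₁ ≤ K := by rw [hKdef]; linarith
  have hKξ : 2 / c₁ ^ ((1:ℝ)/α) ≤ K := by rw [hKdef]; linarith
  refine ⟨K, by linarith, c₁ / 16, by positivity, ?_⟩
  intro k hk ξ hsum h01 h10 h21 h32 hsm hsm2 hbig
  -- M > 0
  have hMpos : 0 < M := by
    have h1 : c₁ * ξ₀ ^ α ≤ M := by
      calc c₁ * ξ₀ ^ α ≤ deriv p ξ₀ := (hp' ξ₀ le_rfl).1
        _ ≤ |deriv p ξ₀| := le_abs_self _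
        _ ≤ M := hM ξ₀ ⟨hξ₀.le, le_rfl⟩
    have : (0:ℝ) < c₁ * ξ₀ ^ α := by positivity
    linarith
  have hξ0ne : ((ξ 0 : ℤ) : ℝ) ≠ 0 := by
    intro h
    rw [h, abs_zero] at hbig
    have : (0:ℝ) < K * M ^ (1/α) := by positivity
    linarith
  rcases hξ0ne.lt_or_gt with hneg | hpos
  · -- negative case: apply to -ξ
    have key := resonance_main α hα1 hα2 p ξ₀ hξ₀ hodd hC1 c₁ C₁ hc₁ hp' M hM0 hM C hC
      K hK4 hK12 hKc hKξ k hk (fun j => -ξ j)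
      (by rw [Finset.sum_neg_distrib, hsum, neg_zero])
      (by push_cast [abs_neg]; exact h01)
      (by push_cast [abs_neg]; exact h10)
      (by push_cast [abs_neg]; exact h21)
      (by push_cast [abs_neg]; exact h32)
      (by intro j hj; push_cast [abs_neg]; exact hsm j hj)
      (by
        intro j hj
        have h := hsm2 j hj
        push_cast [abs_neg] at h ⊢
        rw [show -(((ξ 2 : ℤ):ℝ)) + -(((ξ 3 : ℤ):ℝ)) = -(((ξ 2 : ℤ):ℝ) + ((ξ 3 : ℤ):ℝ)) by ring,
          abs_neg]
        exact h)
      (by push_cast [abs_neg]; exact hbig)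
      (by push_cast; linarith)
    have e1 : |(((-ξ 2) + (-ξ 3) : ℤ) : ℝ)| = |((ξ 2 + ξ 3 : ℤ) : ℝ)| := by
      push_cast
      rw [show -(((ξ 2 : ℤ):ℝ)) + -(((ξ 3 : ℤ):ℝ)) = -(((ξ 2 : ℤ):ℝ) + ((ξ 3 : ℤ):ℝ)) by ring,
        abs_neg]
    have e0 : |((-ξ 0 : ℤ) : ℝ)| = |((ξ 0 : ℤ) : ℝ)| := by push_cast [abs_neg]; ring_nf
    have esum : |∑ j, p ((-ξ j : ℤ) : ℝ)| = |∑ j, p ((ξ j : ℤ) : ℝ)| := by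
      have h1 : (∑ j, p ((-ξ j : ℤ) : ℝ)) = - ∑ j, p ((ξ j : ℤ) : ℝ) := by
        rw [← Finset.sum_neg_distrib]
        apply Finset.sum_congr rfl
        intro j _
        push_cast
        exact hodd _
      rw [h1, abs_neg]
    rw [e1, e0, esum] at key
    exact key
  · exact resonance_main α hα1 hα2 p ξ₀ hξ₀ hodd hC1 c₁ C₁ hc₁ hp' M hM0 hM C hC
      K hK4 hK12 hKc hKξ k hk ξ hsum h01 h10 h21 h32 hsm hsm2 hbig hpos
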